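/- Let 0 ≤ R₀ < R₁ and let G : ℂ → ℂ be holomorphic on the annulus A(R₀,R₁) = {z ∈ ℂ : R₀ < |z| < R₁}. Suppose that ∫₀^{2π} G(r·e^{iθ})² dθ = 0 for some r with R₀ < r < R₁, and that for every ρ with R₀ < ρ < R₁ equality 2·ρ²·∫₀^{2π} ‖G′(ρ·e^{iθ})‖² dθ = ∫₀^{2π} ‖G(ρ·e^{iθ})‖² dθ holds. Then G is identically zero on A(R₀,R₁). -/

import Mathlib

open Complex Real MeasureTheory AddCircle

noncomputable section

instance : Fact (0 < 2 * π) := ⟨by positivity⟩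


lemma toCircle_eq (θ : ℝ) : (AddCircle.toCircle (θ : AddCircle (2*π)) : ℂ) = Complex.exp (θ * I) := by
  have h := fourier_coe_apply' (T := 2*π) (n := 1) (x := θ)
  rw [one_zsmul] at h
  rw [h]
  congr 1
  have hπ : (π:ℂ) ≠ 0 := by exact_mod_cast Real.pi_ne_zero
  push_cast
  field_simp

/-- The circle restriction of `f` at radius `ρ`, as a function on `AddCircle (2π)`. -/
def Circ (f : ℂ → ℂ) (ρ : ℝ) : AddCircle (2*π) → ℂ := fun t => f (ρ * (AddCircle.toCircle t : ℂ))

lemma circ_coe (f : ℂ → ℂ) (ρ θ : ℝ) :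
    Circ f ρ (θ : AddCircle (2*π)) = f (ρ * Complex.exp (θ * I)) := by
  rw [Circ, toCircle_eq]

lemma continuous_circ {f : ℂ → ℂ} {S : Set ℂ} (hf : ContinuousOn f S) {ρ : ℝ}
    (hm : ∀ t : AddCircle (2*π), (ρ : ℂ) * (AddCircle.toCircle t : ℂ) ∈ S) :
    Continuous (Circ f ρ) := by
  apply hf.comp_continuous _ hm
  exact continuous_const.mul (continuous_induced_dom.comp AddCircle.continuous_toCircle)

/-- Fourier coefficient of the circle restriction. -/
def coefC (f : ℂ → ℂ) (n : ℤ) (ρ : ℝ) : ℂ := fourierCoeff (Circ f ρ) n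

lemma coefC_eq (f : ℂ → ℂ) (n : ℤ) (ρ : ℝ) :
    coefC f n ρ = (1 / (2*π) : ℝ) •
      ∫ θ in (0:ℝ)..(2*π), Complex.exp (-(n:ℂ) * θ * I) * f (ρ * Complex.exp (θ * I)) := by
  rw [coefC, fourierCoeff_eq_intervalIntegral _ _ 0, zero_add]
  congr 1
  apply intervalIntegral.integral_congr
  intro θ _
  simp only [fourier_coe_apply, circ_coe, smul_eq_mul]
  congr 2
  have hπ : (π:ℂ) ≠ 0 := by exact_mod_cast Real.pi_ne_zero
  push_cast
  field_simp

lemma parseval_circ {f : ℂ → ℂ} {S : Set ℂ} (hf : ContinuousOn f S) {ρ : ℝ}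
    (hm : ∀ t : AddCircle (2*π), (ρ : ℂ) * (AddCircle.toCircle t : ℂ) ∈ S) :
    (∫ θ in (0:ℝ)..(2*π), ‖f ((ρ:ℂ) * Complex.exp (θ * I))‖ ^ 2)
      = 2 * π * ∑' n : ℤ, ‖coefC f n ρ‖ ^ 2 ∧
    Summable (fun n : ℤ => ‖coefC f n ρ‖ ^ 2) := by
  set F : C(AddCircle (2*π), ℂ) := ⟨Circ f ρ, continuous_circ hf hm⟩ with hF
  set FL := ContinuousMap.toLp (E := ℂ) 2 haarAddCircle ℂ F with hFL
  have hcoef : ∀ n : ℤ, fourierCoeff (FL : AddCircle (2*π) → ℂ) n = coefC f n ρ := by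
    intro n; rw [hFL, fourierCoeff_toLp]; rfl
  have hsum : Summable (fun n : ℤ => ‖coefC f n ρ‖ ^ 2) := by
    have := Orthonormal.inner_products_summable (𝕜 := ℂ) (x := FL)
      (v := (fourierBasis (T := 2*π) : ℤ → _)) fourierBasis.orthonormal
    simp_rw [← HilbertBasis.repr_apply_apply, fourierBasis_repr, hcoef] at this
    exact this
  constructor
  · have hpars := tsum_sq_fourierCoeff FL
    simp_rw [hcoef] at hpars
    rw [hpars]
    have h1 : (∫ θ in (0:ℝ)..(2*π), ‖f ((ρ:ℂ) * Complex.exp (θ * I))‖ ^ 2)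
        = ∫ t : AddCircle (2*π), ‖F t‖ ^ 2 ∂volume := by
      rw [← AddCircle.intervalIntegral_preimage (2*π) 0 (fun t => ‖F t‖^2), zero_add]
      apply intervalIntegral.integral_congr
      intro θ _
      simp only [hF, ContinuousMap.coe_mk, circ_coe]
    have h2 : ∫ t : AddCircle (2*π), ‖F t‖ ^ 2 ∂volume
        = (2*π) * ∫ t : AddCircle (2*π), ‖F t‖ ^ 2 ∂haarAddCircle := by
      rw [volume_eq_smul_haarAddCircle, integral_smul_measure, ENNReal.toReal_ofReal Real.two_pi_pos.le,
        smul_eq_mul]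
    have h3 : ∫ t : AddCircle (2*π), ‖F t‖ ^ 2 ∂haarAddCircle
        = ∫ t : AddCircle (2*π), ‖(FL : AddCircle (2*π) → ℂ) t‖ ^ 2 ∂haarAddCircle := by
      apply integral_congr_ae
      filter_upwards [ContinuousMap.coeFn_toLp (p := 2) haarAddCircle (𝕜 := ℂ) F] with t ht
      rw [ht]
    rw [h1, h2, h3]
  · exact hsum


/-- The integral `∫₀^{2π} e^{-inθ} f(ρ e^{iθ}) dθ`. -/
def II (f : ℂ → ℂ) (n : ℤ) (ρ : ℝ) : ℂ :=
  ∫ θ in (0:ℝ)..(2*π), Complex.exp (-(n:ℂ) * θ * I) * f ((ρ:ℂ) * Complex.exp (θ * I))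

lemma circleIntegral_as (g : ℂ → ℂ) (ρ : ℝ) :
    (∮ z in C((0:ℂ), ρ), g z)
      = ∫ θ in (0:ℝ)..(2*π), ((ρ:ℂ) * Complex.exp (θ * I) * I) * g ((ρ:ℂ) * Complex.exp (θ * I)) := by
  simp only [circleIntegral, deriv_circleMap, circleMap, zero_add, smul_eq_mul]

lemma circleIntegral_zpow (g : ℂ → ℂ) (n : ℤ) {ρ : ℝ} (hρ : 0 < ρ) :
    (∮ z in C((0:ℂ), ρ), g z * z ^ (-n-1)) = I * (ρ:ℂ) ^ (-n) * II g n ρ := by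
  rw [circleIntegral_as, II, ← intervalIntegral.integral_const_mul]
  apply intervalIntegral.integral_congr
  intro θ _
  have hρ' : (ρ:ℂ) ≠ 0 := ofReal_ne_zero.2 hρ.ne'
  simp only
  have h1 : ((ρ:ℂ) * Complex.exp (θ * I)) ^ (-n-1)
      = (ρ:ℂ) ^ (-n-1) * Complex.exp (((-n-1 : ℤ) : ℂ) * (θ * I)) := by
    rw [mul_zpow, Complex.exp_int_mul]
  have h2 : Complex.exp (-(n:ℂ) * θ * I)
      = Complex.exp (θ * I) * Complex.exp (((-n-1 : ℤ) : ℂ) * (θ * I)) := by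
    rw [← Complex.exp_add]; congr 1; push_cast; ring
  have h3 : (ρ:ℂ) ^ (-n) = (ρ:ℂ) * (ρ:ℂ) ^ (-n-1) := by
    rw [← zpow_one_add₀ hρ']; congr 1; ring
  rw [h1, h2, h3]; ring

lemma annulus_isOpen (R₀ R₁ : ℝ) : IsOpen {z : ℂ | R₀ < ‖z‖ ∧ ‖z‖ < R₁} := by
  have : {z : ℂ | R₀ < ‖z‖ ∧ ‖z‖ < R₁}
      = (fun z : ℂ => ‖z‖) ⁻¹' (Set.Ioo R₀ R₁) := rfl
  rw [this]
  exact isOpen_Ioo.preimage continuous_norm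

lemma II_radial {R₀ R₁ : ℝ} (hR₀ : 0 ≤ R₀) {G : ℂ → ℂ}
    (hG : DifferentiableOn ℂ G {z : ℂ | R₀ < ‖z‖ ∧ ‖z‖ < R₁})
    (n : ℤ) {ρ σ : ℝ} (hρ₀ : R₀ < ρ) (hρ₁ : ρ < R₁) (hσ₀ : R₀ < σ) (hσ₁ : σ < R₁)
    (hle : ρ ≤ σ) :
    I * (ρ:ℂ) ^ (-n) * II G n ρ = I * (σ:ℂ) ^ (-n) * II G n σ := by
  rw [← circleIntegral_zpow G n (hR₀.trans_lt hρ₀), ← circleIntegral_zpow G n (hR₀.trans_lt hσ₀)]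
  refine (circleIntegral_eq_of_differentiable_on_annulus_off_countable
    (hR₀.trans_lt hρ₀) hle Set.countable_empty ?_ ?_).symm
  · -- continuity on closedBall σ \ ball ρ
    have hsub : Metric.closedBall (0:ℂ) σ \ Metric.ball 0 ρ
        ⊆ {z : ℂ | R₀ < ‖z‖ ∧ ‖z‖ < R₁} := by
      rintro z ⟨h1, h2⟩
      rw [Metric.mem_closedBall, Complex.dist_eq, sub_zero] at h1
      rw [Metric.mem_ball, Complex.dist_eq, sub_zero, not_lt] at h2
      exact ⟨hρ₀.trans_le h2, h1.trans_lt hσ₁⟩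
    refine ContinuousOn.mul (hG.continuousOn.mono hsub) ?_
    refine continuousOn_id.zpow₀ (-n-1) fun z hz => Or.inl ?_
    have := (hsub hz).1
    intro h; simp only [id_eq] at h; rw [h] at this; simp at this; linarith
  · rintro z ⟨⟨h1, h2⟩, -⟩
    rw [Metric.mem_ball, Complex.dist_eq, sub_zero] at h1
    rw [Metric.mem_closedBall, Complex.dist_eq, sub_zero, not_le] at h2
    have hzmem : z ∈ {z : ℂ | R₀ < ‖z‖ ∧ ‖z‖ < R₁} :=
      ⟨hρ₀.trans h2, h1.trans_le (le_of_lt hσ₁)⟩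
    have hz0 : z ≠ 0 := by
      intro h; rw [h] at h2; simp at h2; linarith
    exact (hG.differentiableAt ((annulus_isOpen R₀ R₁).mem_nhds hzmem)).mul
      ((differentiableAt_zpow.mpr (Or.inl hz0)))

lemma II_radial' {R₀ R₁ : ℝ} (hR₀ : 0 ≤ R₀) {G : ℂ → ℂ}
    (hG : DifferentiableOn ℂ G {z : ℂ | R₀ < ‖z‖ ∧ ‖z‖ < R₁})
    (n : ℤ) {ρ σ : ℝ} (hρ₀ : R₀ < ρ) (hρ₁ : ρ < R₁) (hσ₀ : R₀ < σ) (hσ₁ : σ < R₁) :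
    (ρ:ℂ) ^ (-n) * II G n ρ = (σ:ℂ) ^ (-n) * II G n σ := by
  rcases le_total ρ σ with h | h
  · have := II_radial hR₀ hG n hρ₀ hρ₁ hσ₀ hσ₁ h
    rw [mul_assoc, mul_assoc] at this
    exact mul_left_cancel₀ I_ne_zero this
  · have := II_radial hR₀ hG n hσ₀ hσ₁ hρ₀ hρ₁ h
    rw [mul_assoc, mul_assoc] at this
    exact (mul_left_cancel₀ I_ne_zero this).symm

lemma cont_param : Continuous fun θ : ℝ => (Complex.I * θ : ℂ) := by fun_prop

lemma cont_circle_comp {f : ℂ → ℂ} {S : Set ℂ} (hf : ContinuousOn f S) {ρ : ℝ}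
    (hm : ∀ θ : ℝ, (ρ:ℂ) * Complex.exp (θ * I) ∈ S) :
    Continuous fun θ : ℝ => f ((ρ:ℂ) * Complex.exp (θ * I)) := by
  apply hf.comp_continuous _ hm
  have : Continuous fun θ : ℝ => ((θ:ℂ) * I) := by fun_prop
  exact continuous_const.mul (Complex.continuous_exp.comp this)

lemma cont_zpow_circle (m : ℤ) {ρ : ℝ} (hρ : 0 < ρ) :
    Continuous fun θ : ℝ => ((ρ:ℂ) * Complex.exp (θ * I)) ^ m := by
  have h : (fun θ : ℝ => ((ρ:ℂ) * Complex.exp (θ * I)) ^ m)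
      = fun θ : ℝ => (ρ:ℂ) ^ m * Complex.exp ((m:ℂ) * (θ * I)) := by
    funext θ; rw [mul_zpow, Complex.exp_int_mul]
  rw [h]
  have : Continuous fun θ : ℝ => ((m:ℂ) * (θ * I)) := by fun_prop
  exact continuous_const.mul (Complex.continuous_exp.comp this)

lemma mem_annulus_circle {R₀ R₁ ρ : ℝ} (hR₀ : 0 ≤ R₀) (hρ₀ : R₀ < ρ) (hρ₁ : ρ < R₁) (θ : ℝ) :
    (ρ:ℂ) * Complex.exp (θ * I) ∈ {z : ℂ | R₀ < ‖z‖ ∧ ‖z‖ < R₁} := by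
  have h : ‖(ρ:ℂ) * Complex.exp (θ * I)‖ = ρ := by
    rw [norm_mul, Complex.norm_exp]
    simp [Complex.norm_real, abs_of_pos (hR₀.trans_lt hρ₀)]
  exact ⟨by rw [h]; exact hρ₀, by rw [h]; exact hρ₁⟩

lemma circle_ne_zero {ρ : ℝ} (hρ : 0 < ρ) (θ : ℝ) : (ρ:ℂ) * Complex.exp (θ * I) ≠ 0 :=
  mul_ne_zero (ofReal_ne_zero.2 hρ.ne') (Complex.exp_ne_zero _)

/-- Integration by parts on the circle: `ρ · II (G') (n-1) ρ = n · II G n ρ`. -/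
lemma II_deriv_rel {R₀ R₁ : ℝ} (hR₀ : 0 ≤ R₀) {G : ℂ → ℂ}
    (hG : DifferentiableOn ℂ G {z : ℂ | R₀ < ‖z‖ ∧ ‖z‖ < R₁})
    (hD : ContinuousOn (deriv G) {z : ℂ | R₀ < ‖z‖ ∧ ‖z‖ < R₁})
    (n : ℤ) {ρ : ℝ} (hρ₀ : R₀ < ρ) (hρ₁ : ρ < R₁) :
    (ρ:ℂ) * II (deriv G) (n-1) ρ = (n:ℂ) * II G n ρ := by
  set S := {z : ℂ | R₀ < ‖z‖ ∧ ‖z‖ < R₁} with hS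
  have hρ : 0 < ρ := hR₀.trans_lt hρ₀
  have hρ' : (ρ:ℂ) ≠ 0 := ofReal_ne_zero.2 hρ.ne'
  have hmem := mem_annulus_circle hR₀ hρ₀ hρ₁
  have hne := circle_ne_zero hρ
  -- the derivative of θ ↦ G(ρe^{iθ}) (ρe^{iθ})^{-n}
  set u : ℝ → ℂ := fun θ =>
    (deriv G ((ρ:ℂ) * Complex.exp (θ * I)) * ((ρ:ℂ) * Complex.exp (θ * I)) ^ (-n)
      + G ((ρ:ℂ) * Complex.exp (θ * I)) * (((-n : ℤ):ℂ) * ((ρ:ℂ) * Complex.exp (θ * I)) ^ (-n-1)))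
      * ((ρ:ℂ) * (Complex.exp (θ * I) * I)) with hu
  have hderiv : ∀ θ ∈ Set.uIcc (0:ℝ) (2*π),
      HasDerivAt (fun θ : ℝ => G ((ρ:ℂ) * Complex.exp (θ * I))
        * ((ρ:ℂ) * Complex.exp (θ * I)) ^ (-n)) (u θ) θ := by
    intro θ _
    have h1c : HasDerivAt (fun w : ℂ => (ρ:ℂ) * Complex.exp (w * I))
        ((ρ:ℂ) * (Complex.exp ((θ:ℂ) * I) * I)) (θ:ℂ) := by
      have hid : HasDerivAt (fun w : ℂ => w * I) I (θ:ℂ) := by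
        simpa using (hasDerivAt_id (θ:ℂ)).mul_const I
      exact (hid.cexp).const_mul (ρ:ℂ)
    have h1 : HasDerivAt (fun θ : ℝ => (ρ:ℂ) * Complex.exp (θ * I))
        ((ρ:ℂ) * (Complex.exp ((θ:ℂ) * I) * I)) θ := h1c.comp_ofReal
    have hF : HasDerivAt (fun w : ℂ => G w * w ^ (-n))
        (deriv G ((ρ:ℂ) * Complex.exp (θ * I)) * ((ρ:ℂ) * Complex.exp (θ * I)) ^ (-n)
          + G ((ρ:ℂ) * Complex.exp (θ * I))
            * (((-n : ℤ):ℂ) * ((ρ:ℂ) * Complex.exp (θ * I)) ^ (-n-1)))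
        ((ρ:ℂ) * Complex.exp (θ * I)) := by
      have hGd : HasDerivAt G (deriv G ((ρ:ℂ) * Complex.exp (θ * I)))
          ((ρ:ℂ) * Complex.exp (θ * I)) :=
        (hG.differentiableAt ((annulus_isOpen R₀ R₁).mem_nhds (hmem θ))).hasDerivAt
      have hzp := hasDerivAt_zpow (-n) ((ρ:ℂ) * Complex.exp (θ * I)) (Or.inl (hne θ))
      exact hGd.mul hzp
    have := hF.comp θ h1
    exact this
  have hucont : Continuous u := by
    apply Continuous.mul
    · apply Continuous.add
      · exact (cont_circle_comp hD hmem).mul (cont_zpow_circle (-n) hρ)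
      · exact (cont_circle_comp hG.continuousOn hmem).mul
          (continuous_const.mul (cont_zpow_circle (-n-1) hρ))
    · have : Continuous fun θ : ℝ => ((θ:ℂ) * I) := by fun_prop
      exact continuous_const.mul ((Complex.continuous_exp.comp this).mul continuous_const)
  have hzero : (∫ θ in (0:ℝ)..(2*π), u θ) = 0 := by
    rw [intervalIntegral.integral_eq_sub_of_hasDerivAt hderiv
      (hucont.intervalIntegrable 0 (2*π))]
    have h2π : ((2*π : ℝ) : ℂ) * I = 2 * (π:ℂ) * I := by push_cast; ring
    simp only [h2π, Complex.exp_two_pi_mul_I, Complex.ofReal_zero, zero_mul, Complex.exp_zero]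
    ring
  -- rewrite the integral of u as a combination of the II's.
  have hsplit : (∫ θ in (0:ℝ)..(2*π), u θ)
      = (I * (ρ:ℂ) ^ (1-n)) * II (deriv G) (n-1) ρ
        + (-(n:ℂ) * I * (ρ:ℂ) ^ (-n)) * II G n ρ := by
    rw [II, II, ← intervalIntegral.integral_const_mul, ← intervalIntegral.integral_const_mul,
      ← intervalIntegral.integral_add]
    · apply intervalIntegral.integral_congr
      intro θ _
      simp only [hu]
      have e1 : ((ρ:ℂ) * Complex.exp (θ * I)) ^ (-n)
          = (ρ:ℂ) ^ (-n) * Complex.exp (((-n : ℤ):ℂ) * (θ * I)) := by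
        rw [mul_zpow, Complex.exp_int_mul]
      have e2 : ((ρ:ℂ) * Complex.exp (θ * I)) ^ (-n-1)
          = (ρ:ℂ) ^ (-n-1) * Complex.exp (((-n-1 : ℤ):ℂ) * (θ * I)) := by
        rw [mul_zpow, Complex.exp_int_mul]
      have e3 : Complex.exp (-(((n-1 : ℤ)):ℂ) * θ * I)
          = Complex.exp (θ * I) * Complex.exp (((-n : ℤ):ℂ) * (θ * I)) := by
        rw [← Complex.exp_add]; push_cast; try ring
      have e4 : Complex.exp (-(n:ℂ) * θ * I)
          = Complex.exp (θ * I) * Complex.exp (((-n-1 : ℤ):ℂ) * (θ * I)) := by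
        rw [← Complex.exp_add]; push_cast; try ring
      have e5 : (ρ:ℂ) ^ (1-n) = (ρ:ℂ) * ((ρ:ℂ) * (ρ:ℂ) ^ (-n-1)) := by
        rw [← zpow_one_add₀ hρ', ← zpow_one_add₀ hρ']; congr 1; ring
      have e6 : (ρ:ℂ) ^ (-n) = (ρ:ℂ) * (ρ:ℂ) ^ (-n-1) := by
        rw [← zpow_one_add₀ hρ']; congr 1; ring
      rw [e1, e2, e3, e4, e5, e6]
      push_cast
      ring
    · apply Continuous.intervalIntegrable
      exact continuous_const.mul ((Complex.continuous_exp.comp (by fun_prop)).mul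
        (cont_circle_comp hD hmem))
    · apply Continuous.intervalIntegrable
      exact continuous_const.mul ((Complex.continuous_exp.comp (by fun_prop)).mul
        (cont_circle_comp hG.continuousOn hmem))
  rw [hsplit] at hzero
  have e5 : (ρ:ℂ) ^ (1-n) = (ρ:ℂ) * (ρ:ℂ) ^ (-n) := by
    rw [sub_eq_add_neg, zpow_one_add₀ hρ']
  rw [e5] at hzero
  have hzp : (ρ:ℂ) ^ (-n) ≠ 0 := zpow_ne_zero _ hρ'
  have hfac : (I * (ρ:ℂ)^(-n)) * ((ρ:ℂ) * II (deriv G) (n-1) ρ - (n:ℂ) * II G n ρ) = 0 := by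
    rw [← hzero]; ring
  rcases mul_eq_zero.1 hfac with h | h
  · exact absurd h (mul_ne_zero I_ne_zero hzp)
  · exact sub_eq_zero.1 h

/-- If a two-sided power series with nonnegative coefficients satisfies
`∑ 2n² dₙ ρ^{2n} = ∑ dₙ ρ^{2n}` at three radii in geometric progression, then all
off-center coefficients vanish. -/
lemma kill_coeffs (d : ℤ → ℝ) (hd : ∀ n, 0 ≤ d n) {ρ₁ ρ₂ ρ₃ : ℝ}
    (h1 : 0 < ρ₁) (h2 : 0 < ρ₂) (h13 : ρ₁ < ρ₃) (hgeom : ρ₂ * ρ₂ = ρ₁ * ρ₃)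
    (hP1 : Summable fun n : ℤ => d n * ρ₁ ^ (2*n))
    (hP2 : Summable fun n : ℤ => d n * ρ₂ ^ (2*n))
    (hP3 : Summable fun n : ℤ => d n * ρ₃ ^ (2*n))
    (hQ1 : Summable fun n : ℤ => 2 * (n:ℝ)^2 * d n * ρ₁ ^ (2*n))
    (hQ2 : Summable fun n : ℤ => 2 * (n:ℝ)^2 * d n * ρ₂ ^ (2*n))
    (hQ3 : Summable fun n : ℤ => 2 * (n:ℝ)^2 * d n * ρ₃ ^ (2*n))
    (he1 : ∑' n : ℤ, 2 * (n:ℝ)^2 * d n * ρ₁ ^ (2*n) = ∑' n : ℤ, d n * ρ₁ ^ (2*n))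
    (he2 : ∑' n : ℤ, 2 * (n:ℝ)^2 * d n * ρ₂ ^ (2*n) = ∑' n : ℤ, d n * ρ₂ ^ (2*n))
    (he3 : ∑' n : ℤ, 2 * (n:ℝ)^2 * d n * ρ₃ ^ (2*n) = ∑' n : ℤ, d n * ρ₃ ^ (2*n)) :
    ∀ n : ℤ, n ≠ 0 → d n = 0 := by
  have h3 : 0 < ρ₃ := h1.trans h13
  -- the gap function
  set b : ℤ → ℝ := fun n => ρ₁ ^ (2*n) + ρ₃ ^ (2*n) - 2 * ρ₂ ^ (2*n) with hb
  have hsq : ∀ n : ℤ, b n = (ρ₁ ^ n - ρ₃ ^ n)^2 := by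
    intro n
    have e1 : ρ₁ ^ (2*n) = ρ₁ ^ n * ρ₁ ^ n := by
      rw [two_mul, zpow_add₀ h1.ne']
    have e3 : ρ₃ ^ (2*n) = ρ₃ ^ n * ρ₃ ^ n := by
      rw [two_mul, zpow_add₀ h3.ne']
    have e2 : ρ₂ ^ (2*n) = ρ₁ ^ n * ρ₃ ^ n := by
      rw [two_mul, zpow_add₀ h2.ne', ← mul_zpow, hgeom, mul_zpow]
    rw [hb]; simp only [e1, e2, e3]; ring
  have hbpos : ∀ n : ℤ, n ≠ 0 → 0 < b n := by
    intro n hn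
    rw [hsq]
    have hne : ρ₁ ^ n ≠ ρ₃ ^ n := by
      intro hEq
      have hq : (ρ₃/ρ₁) ^ n = 1 := by
        rw [div_zpow, ← hEq, div_self (zpow_ne_zero _ h1.ne')]
      have hq1 : 1 < ρ₃/ρ₁ := (one_lt_div h1).2 h13
      rcases lt_trichotomy n 0 with h | h | h
      · have := zpow_lt_one_of_neg₀ hq1 h; linarith
      · exact hn h
      · have := one_lt_zpow₀ hq1 h; linarith
    have hne' := sub_ne_zero.mpr hne
    exact lt_of_le_of_ne (sq_nonneg _) (Ne.symm (pow_ne_zero 2 hne'))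
  have hbnn : ∀ n : ℤ, 0 ≤ b n := fun n => (hsq n).symm ▸ sq_nonneg _
  -- combined sums
  have hQb : Summable fun n : ℤ => 2 * (n:ℝ)^2 * d n * b n := by
    have := (hQ1.add hQ3).sub (hQ2.mul_left 2)
    refine this.congr fun n => ?_
    simp only [hb]; ring
  have hPb : Summable fun n : ℤ => d n * b n := by
    have := (hP1.add hP3).sub (hP2.mul_left 2)
    refine this.congr fun n => ?_
    simp only [hb]; ring
  have hQbe : ∑' n : ℤ, 2 * (n:ℝ)^2 * d n * b n = ∑' n : ℤ, d n * b n := by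
    have l1 : ∑' n : ℤ, 2 * (n:ℝ)^2 * d n * b n
        = (∑' n : ℤ, 2 * (n:ℝ)^2 * d n * ρ₁ ^ (2*n)) + (∑' n : ℤ, 2 * (n:ℝ)^2 * d n * ρ₃ ^ (2*n))
          - 2 * ∑' n : ℤ, 2 * (n:ℝ)^2 * d n * ρ₂ ^ (2*n) := by
      rw [← tsum_mul_left, ← Summable.tsum_add hQ1 hQ3, ← Summable.tsum_sub (hQ1.add hQ3) (hQ2.mul_left 2)]
      congr 1; funext n; simp only [hb]; ring
    have l2 : ∑' n : ℤ, d n * b n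
        = (∑' n : ℤ, d n * ρ₁ ^ (2*n)) + (∑' n : ℤ, d n * ρ₃ ^ (2*n))
          - 2 * ∑' n : ℤ, d n * ρ₂ ^ (2*n) := by
      rw [← tsum_mul_left, ← Summable.tsum_add hP1 hP3, ← Summable.tsum_sub (hP1.add hP3) (hP2.mul_left 2)]
      congr 1; funext n; simp only [hb]; ring
    rw [l1, l2, he1, he2, he3]
  -- termwise vanishing
  set v : ℤ → ℝ := fun n => 2 * (n:ℝ)^2 * d n * b n - d n * b n with hv
  have hvs : Summable v := hQb.sub hPb
  have hvz : ∑' n, v n = 0 := by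
    rw [hv]
    rw [Summable.tsum_sub hQb hPb, hQbe, sub_self]
  have hvnn : ∀ n : ℤ, 0 ≤ v n := by
    intro n
    rcases eq_or_ne n 0 with rfl | hn
    · have hb0 : b 0 = 0 := by simp [hb]; norm_num
      simp [hv, hb0]
    · have hn2 : 1 ≤ (n:ℝ)^2 := by
        rcases lt_or_gt_of_ne hn with h | h
        · have h' : n ≤ -1 := by omega
          have : (n:ℝ) ≤ -1 := by exact_mod_cast h'
          nlinarith
        · have h' : 1 ≤ n := by omega
          have : (1:ℝ) ≤ n := by exact_mod_cast h'
          nlinarith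
      have hdb : 0 ≤ d n * b n := mul_nonneg (hd n) (hbnn n)
      simp only [hv]
      nlinarith [mul_nonneg hdb (by linarith : (0:ℝ) ≤ (n:ℝ)^2 - 1)]
  intro n hn
  have hle : v n ≤ 0 := hvz ▸ Summable.le_tsum hvs n fun j _ => hvnn j
  have hvn : v n = 0 := le_antisymm hle (hvnn n)
  have hn2 : 1 ≤ (n:ℝ)^2 := by
    rcases lt_or_gt_of_ne hn with h | h
    · have h' : n ≤ -1 := by omega
      have : (n:ℝ) ≤ -1 := by exact_mod_cast h'
      nlinarith
    · have h' : 1 ≤ n := by omega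
      have : (1:ℝ) ≤ n := by exact_mod_cast h'
      nlinarith
  have hbp := hbpos n hn
  have hdn := hd n
  have hfac : d n * b n * (2*(n:ℝ)^2 - 1) = 0 := by simp only [hv] at hvn; nlinarith [hvn]
  have h21 : 0 < 2*(n:ℝ)^2 - 1 := by nlinarith
  have hdb : d n * b n = 0 := by
    rcases mul_eq_zero.1 hfac with h | h
    · exact h
    · exact absurd h h21.ne'
  rcases mul_eq_zero.1 hdb with h | h
  · exact h
  · exact absurd h hbp.ne'

lemma vanish_of_coefC {f : ℂ → ℂ} {S : Set ℂ} (hf : ContinuousOn f S) {ρ : ℝ}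
    (hm : ∀ t : AddCircle (2*π), (ρ : ℂ) * (AddCircle.toCircle t : ℂ) ∈ S)
    (hall : ∀ n : ℤ, coefC f n ρ = 0) :
    ∀ t : AddCircle (2*π), f ((ρ:ℂ) * (AddCircle.toCircle t : ℂ)) = 0 := by
  set F : C(AddCircle (2*π), ℂ) := ⟨Circ f ρ, continuous_circ hf hm⟩ with hF
  set FL := ContinuousMap.toLp (E := ℂ) 2 haarAddCircle ℂ F with hFL
  have hcoef : ∀ n : ℤ, fourierCoeff (FL : AddCircle (2*π) → ℂ) n = coefC f n ρ := by
    intro n; rw [hFL, fourierCoeff_toLp]; rfl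
  have hcont : Continuous fun t : AddCircle (2*π) => ‖F t‖ ^ 2 :=
    (F.continuous.norm).pow 2
  have hint0 : ∫ t : AddCircle (2*π), ‖F t‖ ^ 2 ∂haarAddCircle = 0 := by
    have h3 : ∫ t : AddCircle (2*π), ‖F t‖ ^ 2 ∂haarAddCircle
        = ∫ t : AddCircle (2*π), ‖(FL : AddCircle (2*π) → ℂ) t‖ ^ 2 ∂haarAddCircle := by
      apply integral_congr_ae
      filter_upwards [ContinuousMap.coeFn_toLp (p := 2) haarAddCircle (𝕜 := ℂ) F] with t ht
      rw [ht]
    rw [h3, ← tsum_sq_fourierCoeff FL]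
    simp [hcoef, hall]
  have hnn : 0 ≤ fun t : AddCircle (2*π) => ‖F t‖ ^ 2 := fun t => by positivity
  have hInt : Integrable (fun t : AddCircle (2*π) => ‖F t‖ ^ 2) haarAddCircle := by
    rw [← integrableOn_univ]
    exact hcont.continuousOn.integrableOn_compact isCompact_univ
  have hae := (integral_eq_zero_iff_of_nonneg hnn hInt).1 hint0
  have heq0 : (fun t : AddCircle (2*π) => ‖F t‖ ^ 2) = 0 :=
    (Continuous.ae_eq_iff_eq haarAddCircle hcont continuous_const).1 hae
  intro t
  have h := congrFun heq0 t
  simp only [Pi.zero_apply] at h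
  have : F t = 0 := by
    have := pow_eq_zero_iff (n := 2) (by norm_num) |>.1 h
    simpa using this
  exact this

lemma coefC_II (f : ℂ → ℂ) (n : ℤ) (ρ : ℝ) :
    coefC f n ρ = (1 / (2*π) : ℝ) • II f n ρ :=
  coefC_eq f n ρ

end

open Complex Real

/-- Rigidity: if `∫₀^{2π} G² dθ = 0` on some circle and equality
`2ρ² ∫ ‖G′‖² = ∫ ‖G‖²` holds on every circle, then `G ≡ 0` on the annulus. -/
theorem stmt_12 (R₀ R₁ : ℝ) (hR₀ : 0 ≤ R₀) (hR : R₀ < R₁) (G : ℂ → ℂ)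
    (hG : DifferentiableOn ℂ G
      {z : ℂ | R₀ < ‖z‖ ∧ ‖z‖ < R₁})
    (r : ℝ) (hr₀ : R₀ < r) (hr₁ : r < R₁)
    (hint : ∫ θ in (0:ℝ)..(2 * π),
        (G ((r : ℂ) * Complex.exp (θ * Complex.I))) ^ 2 = 0)
    (heq : ∀ ρ : ℝ, R₀ < ρ → ρ < R₁ →
      2 * ρ ^ 2 * ∫ θ in (0:ℝ)..(2 * π),
          ‖deriv G ((ρ : ℂ) * Complex.exp (θ * Complex.I))‖ ^ 2
        = ∫ θ in (0:ℝ)..(2 * π),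
            ‖G ((ρ : ℂ) * Complex.exp (θ * Complex.I))‖ ^ 2) :
    ∀ z : ℂ, R₀ < ‖z‖ → ‖z‖ < R₁ → G z = 0 := by
  intro z hz₀ hz₁
  set S := {z : ℂ | R₀ < ‖z‖ ∧ ‖z‖ < R₁} with hSdef
  have hOpen := annulus_isOpen R₀ R₁
  have hGc : ContinuousOn G S := hG.continuousOn
  have hDc : ContinuousOn (deriv G) S := ((hG.analyticOnNhd hOpen).deriv).continuousOn
  have hr : 0 < r := hR₀.trans_lt hr₀
  have hmem : ∀ ρ : ℝ, R₀ < ρ → ρ < R₁ →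
      ∀ t : AddCircle (2*π), (ρ:ℂ) * (AddCircle.toCircle t : ℂ) ∈ S := by
    intro ρ h₀ h₁ t
    have habs : ‖(ρ:ℂ) * (AddCircle.toCircle t : ℂ)‖ = ρ := by
      rw [norm_mul, Circle.norm_coe, mul_one, Complex.norm_real, Real.norm_eq_abs,
        abs_of_pos (hR₀.trans_lt h₀)]
    exact ⟨by rw [habs]; exact h₀, by rw [habs]; exact h₁⟩
  -- radial structure of the Fourier coefficients
  set a : ℤ → ℂ := fun n => (r:ℂ) ^ (-n) * coefC G n r with ha
  set d : ℤ → ℝ := fun n => ‖a n‖ ^ 2 with hd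
  have hdnn : ∀ n, 0 ≤ d n := fun n => by positivity
  have hcoefρ : ∀ (n : ℤ) (ρ : ℝ), R₀ < ρ → ρ < R₁ → coefC G n ρ = a n * (ρ:ℂ) ^ n := by
    intro n ρ h₀ h₁
    have hρ : 0 < ρ := hR₀.trans_lt h₀
    have hρ' : ((ρ:ℂ)) ≠ 0 := Complex.ofReal_ne_zero.2 hρ.ne'
    have h2 := II_radial' hR₀ hG n h₀ h₁ hr₀ hr₁
    have e : (ρ:ℂ) ^ (-n) * coefC G n ρ = (r:ℂ) ^ (-n) * coefC G n r := by
      rw [coefC_II, coefC_II, mul_smul_comm, mul_smul_comm, h2]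
    calc coefC G n ρ = ((ρ:ℂ) ^ n * (ρ:ℂ) ^ (-n)) * coefC G n ρ := by
          rw [← zpow_add₀ hρ', add_neg_cancel, zpow_zero, one_mul]
      _ = (ρ:ℂ) ^ n * ((ρ:ℂ) ^ (-n) * coefC G n ρ) := by ring
      _ = (ρ:ℂ) ^ n * ((r:ℂ) ^ (-n) * coefC G n r) := by rw [e]
      _ = a n * (ρ:ℂ) ^ n := by rw [ha]; ring
  have hnormρ : ∀ (n : ℤ) (ρ : ℝ), R₀ < ρ → ρ < R₁ →
      ‖coefC G n ρ‖ ^ 2 = d n * ρ ^ (2*n) := by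
    intro n ρ h₀ h₁
    have hρ : 0 < ρ := hR₀.trans_lt h₀
    rw [hcoefρ n ρ h₀ h₁, norm_mul, mul_pow, hd]
    congr 1
    rw [norm_zpow, Complex.norm_real, Real.norm_of_nonneg hρ.le,
      two_mul, zpow_add₀ hρ.ne']
    ring
  have hDrel : ∀ (n : ℤ) (ρ : ℝ), R₀ < ρ → ρ < R₁ →
      ‖coefC (deriv G) (n-1) ρ‖ ^ 2 * ρ ^ 2 = (n:ℝ) ^ 2 * (d n * ρ ^ (2*n)) := by
    intro n ρ h₀ h₁
    have hρ : 0 < ρ := hR₀.trans_lt h₀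
    have hrel : (ρ:ℂ) * coefC (deriv G) (n-1) ρ = (n:ℂ) * coefC G n ρ := by
      have h2 := II_deriv_rel hR₀ hG hDc n h₀ h₁
      rw [coefC_II, coefC_II, mul_smul_comm, mul_smul_comm, h2]
    have hnrm := congrArg (fun w : ℂ => ‖w‖ ^ 2) hrel
    simp only [norm_mul, mul_pow] at hnrm
    rw [Complex.norm_real, Real.norm_of_nonneg hρ.le] at hnrm
    rw [show ((n:ℂ)) = (((n:ℝ)):ℂ) by push_cast; rfl, Complex.norm_real,
      Real.norm_eq_abs, _root_.sq_abs] at hnrm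
    rw [← hnormρ n ρ h₀ h₁]
    rw [mul_comm (ρ^2) _] at hnrm
    linarith [hnrm]
  -- the per-radius Parseval identity
  have main : ∀ ρ : ℝ, R₀ < ρ → ρ < R₁ →
      Summable (fun n : ℤ => d n * ρ ^ (2*n)) ∧
      Summable (fun n : ℤ => 2 * (n:ℝ)^2 * d n * ρ ^ (2*n)) ∧
      ∑' n : ℤ, 2 * (n:ℝ)^2 * d n * ρ ^ (2*n) = ∑' n : ℤ, d n * ρ ^ (2*n) := by
    intro ρ h₀ h₁
    have hρ : 0 < ρ := hR₀.trans_lt h₀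
    obtain ⟨hPeq, hPsum⟩ := parseval_circ hGc (hmem ρ h₀ h₁)
    obtain ⟨hDeq, hDsum⟩ := parseval_circ hDc (hmem ρ h₀ h₁)
    have hPsum' : Summable (fun n : ℤ => d n * ρ ^ (2*n)) :=
      hPsum.congr fun n => hnormρ n ρ h₀ h₁
    have hDsum' : Summable (fun n : ℤ => ‖coefC (deriv G) (n-1) ρ‖ ^ 2) := by
      have := ((Equiv.subRight (1:ℤ)).summable_iff
        (f := fun m : ℤ => ‖coefC (deriv G) m ρ‖ ^ 2)).2 hDsum
      exact this.congr fun n => rfl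
    have hQsum : Summable (fun n : ℤ => 2 * (n:ℝ)^2 * d n * ρ ^ (2*n)) := by
      have h2 := hDsum'.mul_left (2 * ρ^2)
      refine h2.congr fun n => ?_
      have h3 := hDrel n ρ h₀ h₁
      nlinarith [h3]
    refine ⟨hPsum', hQsum, ?_⟩
    have heqρ := heq ρ h₀ h₁
    rw [hPeq, hDeq] at heqρ
    have hre : ∑' m : ℤ, ‖coefC (deriv G) m ρ‖ ^ 2
        = ∑' n : ℤ, ‖coefC (deriv G) (n-1) ρ‖ ^ 2 :=
      ((Equiv.subRight (1:ℤ)).tsum_eq (fun m : ℤ => ‖coefC (deriv G) m ρ‖ ^ 2)).symm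
    rw [hre] at heqρ
    have hL : 2 * ρ^2 * (2 * π * ∑' n : ℤ, ‖coefC (deriv G) (n-1) ρ‖ ^ 2)
        = 2 * π * ∑' n : ℤ, 2 * (n:ℝ)^2 * d n * ρ ^ (2*n) := by
      have h4 : ∑' n : ℤ, 2 * (n:ℝ)^2 * d n * ρ ^ (2*n)
          = ∑' n : ℤ, (2 * ρ^2) * ‖coefC (deriv G) (n-1) ρ‖ ^ 2 := by
        apply tsum_congr
        intro n
        have h3 := hDrel n ρ h₀ h₁
        nlinarith [h3]
      rw [h4, tsum_mul_left]
      ring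
    have hRt : ∑' n : ℤ, ‖coefC G n ρ‖ ^ 2 = ∑' n : ℤ, d n * ρ ^ (2*n) :=
      tsum_congr fun n => hnormρ n ρ h₀ h₁
    rw [hRt] at heqρ
    have h5 : 2 * π * ∑' n : ℤ, 2 * (n:ℝ)^2 * d n * ρ ^ (2*n)
        = 2 * π * ∑' n : ℤ, d n * ρ ^ (2*n) := by rw [← hL, heqρ]
    exact mul_left_cancel₀ (by positivity : (2*π:ℝ) ≠ 0) h5
  -- three radii in geometric progression
  set ρ₃ : ℝ := (r + R₁) / 2 with hρ₃def
  have hρ₃a : R₀ < ρ₃ := by simp only [hρ₃def]; linarith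
  have hρ₃b : ρ₃ < R₁ := by simp only [hρ₃def]; linarith
  have h13 : r < ρ₃ := by simp only [hρ₃def]; linarith
  set ρ₂ : ℝ := Real.sqrt (r * ρ₃) with hρ₂def
  have hrρ₃ : (0:ℝ) < r * ρ₃ := mul_pos hr (hr.trans h13)
  have hρ₂sq : ρ₂ * ρ₂ = r * ρ₃ := Real.mul_self_sqrt hrρ₃.le
  have hρ₂pos : 0 < ρ₂ := Real.sqrt_pos.2 hrρ₃
  have hρ₂a : R₀ < ρ₂ := by nlinarith
  have hρ₂b : ρ₂ < R₁ := by nlinarith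
  obtain ⟨hP1, hQ1, he1⟩ := main r hr₀ hr₁
  obtain ⟨hP2, hQ2, he2⟩ := main ρ₂ hρ₂a hρ₂b
  obtain ⟨hP3, hQ3, he3⟩ := main ρ₃ hρ₃a hρ₃b
  have hkill := kill_coeffs d hdnn hr hρ₂pos h13 hρ₂sq hP1 hP2 hP3 hQ1 hQ2 hQ3 he1 he2 he3
  have hd0 : d 0 = 0 := by
    have hQ0 : ∑' n : ℤ, 2 * (n:ℝ)^2 * d n * r ^ (2*n) = 0 := by
      have : ∀ n : ℤ, 2 * (n:ℝ)^2 * d n * r ^ (2*n) = 0 := by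
        intro n
        rcases eq_or_ne n 0 with rfl | hn
        · norm_num
        · rw [hkill n hn]; ring
      rw [tsum_congr this, tsum_zero]
    have hP0 : ∑' n : ℤ, d n * r ^ (2*n) = d 0 * r ^ (2*(0:ℤ)) := by
      apply tsum_eq_single
      intro n hn
      rw [hkill n hn]; ring
    rw [hQ0, hP0] at he1
    simpa using he1.symm
  have hdall : ∀ n : ℤ, d n = 0 := by
    intro n
    rcases eq_or_ne n 0 with rfl | hn
    · exact hd0
    · exact hkill n hn
  have hazero : ∀ n : ℤ, a n = 0 := by
    intro n
    have h := hdall n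
    rw [hd] at h
    have := pow_eq_zero_iff (n := 2) (by norm_num) |>.1 h
    simpa using this
  -- conclude on the circle through z
  set ρ : ℝ := ‖z‖ with hρdef
  have hcz : ∀ n : ℤ, coefC G n ρ = 0 := by
    intro n
    rw [hcoefρ n ρ hz₀ hz₁, hazero, zero_mul]
  have hzero := vanish_of_coefC hGc (hmem ρ hz₀ hz₁) hcz
  have hzt := hzero ((z.arg : ℝ) : AddCircle (2*π))
  rw [toCircle_eq] at hzt
  rwa [hρdef, Complex.norm_mul_exp_arg_mul_I] at hzt
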